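/- Let G be a solvable group. Then every nonprincipal strongly productive ultrafilter on G is regular, and consequently every strongly productive ultrafilter on G is idempotent. -/

import Mathlib

/- Semigroup structure on ultrafilters: `A ∈ p * q ↔ {x | {y | x * y ∈ A} ∈ q} ∈ p`. -/
attribute [local instance] Ultrafilter.semigroup

/-- `FP x` (from Mathlib's `Hindman.FP`) is the set of products `∏_{i ∈ a} x i`, taken in
increasing order of indices, where `a` ranges over finite nonempty subsets of `ℕ`.
An ultrafilter `p` on a semigroup `S` is *strongly productive* if every member of `p` contains
a set of the form `FP x` that itself belongs to `p`. -/
def StronglyProductive {S : Type*} [Semigroup S] (p : Ultrafilter S) : Prop :=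
  ∀ A ∈ p, ∃ x : Stream' S, Hindman.FP x ⊆ A ∧ Hindman.FP x ∈ p

/-- A (nonprincipal strongly productive) ultrafilter `p` is *regular* if some `B ∈ p` has the
property that for every sequence `x` with `FP x ⊆ B`, the set `x₀ · FP₁ x` is not in `p`. -/
def RegularSP {S : Type*} [Semigroup S] (p : Ultrafilter S) : Prop :=
  ∃ B ∈ p, ∀ x : Stream' S, Hindman.FP x ⊆ B →
    (x.head * ·) '' Hindman.FP x.tail ∉ p


section AuxUltra

open Set

variable {α : Type*}

lemma UF.pure_of_singleton {p : Ultrafilter α} {a : α} (h : {a} ∈ p) : p = pure a := by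
  have hne : (p : Filter α).NeBot := p.neBot
  have : (p : Filter α) = pure a := hne.eq_pure_iff.mpr h
  exact Ultrafilter.coe_injective (by simpa using this)

lemma UF.ne_mem {p : Ultrafilter α} {a : α} (h : {a} ∉ p) : {x | x ≠ a} ∈ p := by
  have h2 := Ultrafilter.compl_mem_iff_notMem.mpr h
  have h3 : ({a} : Set α)ᶜ = {x | x ≠ a} := by ext x; simp
  rwa [h3] at h2


lemma UF.exists_avoiding (q : Ultrafilter α) {X : Set α} (hX : X ∈ q) (f : α → α)
    (hmap : ∀ x ∈ X, f x ∈ X) (hfp : ∀ x ∈ X, f x ≠ x)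
    (hinj : ∀ x ∈ X, ∀ y ∈ X, f x = f y → x = y) :
    ∃ B ∈ q, B ⊆ X ∧ ∀ b ∈ B, f b ∉ B := by

  classical
  set S : Set (Set α) := {A | A ⊆ X ∧ ∀ a ∈ A, ∀ b ∈ A, f a ≠ b} with hS
  obtain ⟨A, hAmax⟩ := zorn_subset S (by
    intro c hcS hchain
    refine ⟨⋃₀ c, ⟨?_, ?_⟩, fun s hs => subset_sUnion_of_mem hs⟩
    · exact sUnion_subset fun s hs => (hcS hs).1
    · rintro a ⟨s, hs, has⟩ b ⟨t, ht, hbt⟩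
      rcases hchain.total hs ht with hst | hts
      · exact (hcS ht).2 a (hst has) b hbt
      · exact (hcS hs).2 a has b (hts hbt))
  have hA : A ∈ S := hAmax.prop
  have hcover : X ⊆ A ∪ (f ⁻¹' A ∩ X) ∪ f '' A := by
    intro x hx
    by_cases hxA : x ∈ A
    · exact Or.inl (Or.inl hxA)
    -- maximality: A ∪ {x} is not in S
    have : ¬ (insert x A ∈ S) := by
      intro hins
      exact hxA (hAmax.mem_of_prop_insert hins)
    rw [hS] at this
    simp only [mem_setOf_eq, not_and_or] at this
    rcases this with hbad | hbad
    · exact absurd (insert_subset hx hA.1) hbad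
    push_neg at hbad
    obtain ⟨a, ha, b, hb, hfab⟩ := hbad
    rcases mem_insert_iff.mp ha with rfl | haA
    · rcases mem_insert_iff.mp hb with rfl | hbA
      · exact absurd hfab (hfp _ hx)
      · exact Or.inl (Or.inr ⟨by simpa [hfab] using hbA, hx⟩)
    · rcases mem_insert_iff.mp hb with rfl | hbA
      · exact Or.inr ⟨a, haA, hfab⟩
      · exact absurd hfab (hA.2 a haA b hbA)
  have hup : A ∪ (f ⁻¹' A ∩ X) ∪ f '' A ∈ q := Filter.mem_of_superset hX hcover
  rcases (Ultrafilter.union_mem_iff.mp hup) with h1 | h2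
  · rcases Ultrafilter.union_mem_iff.mp h1 with hA1 | hA2
    · refine ⟨A, hA1, hA.1, fun b hb hfb => hA.2 b hb (f b) hfb rfl⟩
    · refine ⟨f ⁻¹' A ∩ X, hA2, inter_subset_right, ?_⟩
      rintro b ⟨hbA, hbX⟩ ⟨hfbA, hfbX⟩
      exact hA.2 (f b) hbA (f (f b)) hfbA rfl
  · refine ⟨f '' A, h2, ?_, ?_⟩
    · rintro y ⟨a, haA, rfl⟩
      exact hmap a (hA.1 haA)
    · rintro b ⟨a, haA, rfl⟩ ⟨a', ha'A, hfa'⟩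
      have hfaX : f a ∈ X := hmap a (hA.1 haA)
      have ha'X : a' ∈ X := hA.1 ha'A
      have heq : a' = f a := hinj a' ha'X (f a) hfaX hfa'
      have h3 : f a ∈ A := heq ▸ ha'A
      exact hA.2 a haA (f a) h3 rfl


end AuxUltra

section NiceSet


variable {G : Type*} [CommGroup G]

/-- The subgroup of elements killed by some iterated squaring. -/
def quasiTwo (G : Type*) [CommGroup G] : Subgroup G where
  carrier := {g | ∃ n : ℕ, g ^ (2 ^ n) = 1}
  one_mem' := ⟨0, one_pow _⟩
  mul_mem' := by
    rintro a b ⟨m, hm⟩ ⟨n, hn⟩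
    refine ⟨m + n, ?_⟩
    have ha : a ^ (2 ^ (m + n)) = 1 := by
      rw [pow_add, pow_mul, hm, one_pow]
    have hb : b ^ (2 ^ (m + n)) = 1 := by
      rw [pow_add, mul_comm, pow_mul, hn, one_pow]
    rw [mul_pow, ha, hb, one_mul]
  inv_mem' := by
    rintro a ⟨n, hn⟩
    exact ⟨n, by rw [inv_pow, hn, inv_one]⟩

lemma mem_quasiTwo_iff {g : G} : g ∈ quasiTwo G ↔ ∃ n : ℕ, g ^ (2 ^ n) = 1 := Iff.rfl

lemma sq_mem_quasiTwo {g : G} (h : g ^ 2 ∈ quasiTwo G) : g ∈ quasiTwo G := by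
  obtain ⟨n, hn⟩ := h
  refine ⟨n + 1, ?_⟩
  have h2 : (2:ℕ) ^ (n + 1) = 2 * 2 ^ n := by rw [pow_succ, Nat.mul_comm]
  rw [h2, pow_mul]
  exact hn

open Classical in
/-- Height of a `quasiTwo` element. -/
noncomputable def hgt (g : G) : ℕ :=
  if h : ∃ n : ℕ, g ^ (2 ^ n) = 1 then Nat.find h else 0

lemma hgt_spec {g : G} (h : ∃ n : ℕ, g ^ (2 ^ n) = 1) : g ^ (2 ^ hgt g) = 1 := by
  classical
  rw [hgt, dif_pos h]
  exact Nat.find_spec h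

lemma hgt_min {g : G} (h : ∃ n : ℕ, g ^ (2 ^ n) = 1) {k : ℕ} (hk : g ^ (2 ^ k) = 1) :
    hgt g ≤ k := by
  classical
  rw [hgt, dif_pos h]
  exact Nat.find_min' h hk

lemma hgt_pos {g : G} (h : ∃ n : ℕ, g ^ (2 ^ n) = 1) (hg : g ≠ 1) : 1 ≤ hgt g := by
  rcases Nat.eq_zero_or_pos (hgt g) with h0 | h1
  · exfalso
    have := hgt_spec h
    rw [h0, pow_zero, pow_one] at this
    exact hg this
  · exact h1

lemma hgt_sq {g : G} (h : ∃ n : ℕ, g ^ (2 ^ n) = 1) (hg2 : g ^ 2 ≠ 1) :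
    hgt (g ^ 2) = hgt g - 1 := by
  have hg : g ≠ 1 := fun h' => hg2 (by rw [h', one_pow])
  have h1 : 1 ≤ hgt g := hgt_pos h hg
  have hsq : ∃ n : ℕ, (g ^ 2) ^ (2 ^ n) = 1 := by
    refine ⟨hgt g, ?_⟩
    rw [← pow_mul, mul_comm, pow_mul, hgt_spec h, one_pow]
  apply le_antisymm
  · apply hgt_min hsq
    rw [← pow_mul]
    have h2 : 2 * 2 ^ (hgt g - 1) = 2 ^ hgt g := by
      conv_rhs => rw [show hgt g = (hgt g - 1) + 1 by omega]
      rw [pow_succ, Nat.mul_comm]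
    rw [h2]
    exact hgt_spec h
  · have hspec : (g ^ 2) ^ (2 ^ hgt (g ^ 2)) = 1 := hgt_spec hsq
    have hg' : g ^ (2 ^ (hgt (g ^ 2) + 1)) = 1 := by
      have h3 : (2:ℕ) ^ (hgt (g ^ 2) + 1) = 2 * 2 ^ hgt (g ^ 2) := by
        rw [pow_succ, Nat.mul_comm]
      rw [h3, pow_mul]
      exact hspec
    have := hgt_min h hg'
    omega

/-- In a commutative group, every ultrafilter avoiding singletons contains a square-free set. -/
lemma exists_sqfree (p : Ultrafilter G) (h1p : {(1 : G)} ∉ p) :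
    ∃ B ∈ p, ∀ b ∈ B, b ^ 2 ∉ B := by
  classical
  by_cases hcoset : ∃ g₀ : G, {h : G | g₀⁻¹ * h ∈ quasiTwo G} ∈ p
  · obtain ⟨g₀, hg₀⟩ := hcoset
    by_cases hg₀T : g₀ ∈ quasiTwo G
    · -- the coset is quasiTwo itself; use height parity
      have hT : {h : G | h ∈ quasiTwo G} ∈ p := by
        refine Filter.mem_of_superset hg₀ ?_
        intro h hh
        have := (quasiTwo G).mul_mem hg₀T hh
        simpa [mul_inv_cancel_left] using this
      set E := {h : G | h ∈ quasiTwo G ∧ h ≠ 1 ∧ Even (hgt h)} with hE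
      set O := {h : G | h ∈ quasiTwo G ∧ h ≠ 1 ∧ ¬ Even (hgt h)} with hO
      have hmem1 : {h : G | h ∈ quasiTwo G ∧ h ≠ 1} ∈ p :=
        Filter.inter_mem hT (UF.ne_mem h1p)
      have hsplit : {h : G | h ∈ quasiTwo G ∧ h ≠ 1} ⊆ E ∪ O := by
        rintro h ⟨h1, h2⟩
        by_cases he : Even (hgt h)
        · exact Or.inl ⟨h1, h2, he⟩
        · exact Or.inr ⟨h1, h2, he⟩
      have hunion := Filter.mem_of_superset hmem1 hsplit
      have hparity : ∀ b : G, b ∈ quasiTwo G → b ≠ 1 → b ^ 2 ≠ 1 →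
          (Even (hgt b) ↔ ¬ Even (hgt (b ^ 2))) := by
        intro b hbT hb1 hb21
        rw [hgt_sq hbT hb21]
        have h1 : 1 ≤ hgt b := hgt_pos hbT hb1
        constructor
        · rintro ⟨k, hk⟩ ⟨m, hm⟩
          omega
        · intro hne
          rcases Nat.even_or_odd (hgt b) with he | ho
          · exact he
          · exfalso
            apply hne
            obtain ⟨k, hk⟩ := ho
            exact ⟨k, by omega⟩
      rcases Ultrafilter.union_mem_iff.mp hunion with hEp | hOp
      · refine ⟨E, hEp, ?_⟩
        rintro b ⟨hbT, hb1, hbe⟩ ⟨hb2T, hb21, hb2e⟩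
        exact (hparity b hbT hb1 hb21).mp hbe hb2e
      · refine ⟨O, hOp, ?_⟩
        rintro b ⟨hbT, hb1, hbe⟩ ⟨hb2T, hb21, hb2e⟩
        exact hbe ((hparity b hbT hb1 hb21).mpr hb2e)
    · -- coset of a non-member: already square-free
      refine ⟨_, hg₀, ?_⟩
      rintro b hb hb2
      simp only [Set.mem_setOf_eq] at hb hb2
      apply hg₀T
      have hsq : (g₀⁻¹ * b) ^ 2 ∈ quasiTwo G := (quasiTwo G).pow_mem hb 2
      have h2 : (g₀⁻¹ * b ^ 2) * ((g₀⁻¹ * b) ^ 2)⁻¹ ∈ quasiTwo G :=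
        (quasiTwo G).mul_mem hb2 ((quasiTwo G).inv_mem hsq)
      have heq : (g₀⁻¹ * b ^ 2) * ((g₀⁻¹ * b) ^ 2)⁻¹ = g₀ := by
        rw [mul_pow]
        group
      rwa [heq] at h2
  · -- quotient case
    push_neg at hcoset
    set N := quasiTwo G with hN
    set q := p.map (QuotientGroup.mk : G → G ⧸ N) with hq
    have hnonpr : ∀ x : G ⧸ N, {x} ∉ q := by
      intro x hx
      obtain ⟨g, rfl⟩ := QuotientGroup.mk_surjective x
      have hcos : {h : G | g⁻¹ * h ∈ N} ∈ p := by
        have hpre := Ultrafilter.mem_map.mp hx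
        refine Filter.mem_of_superset hpre ?_
        intro h hh
        simp only [Set.mem_preimage, Set.mem_singleton_iff] at hh
        have hone : ((g⁻¹ * h : G) : G ⧸ N) = 1 := by
          rw [QuotientGroup.mk_mul, QuotientGroup.mk_inv, hh, inv_mul_cancel]
        exact (QuotientGroup.eq_one_iff _).mp hone
      exact hcoset g hcos
    have hX : {x : G ⧸ N | x ≠ 1} ∈ q := UF.ne_mem (hnonpr 1)
    have hsq1 : ∀ x : G ⧸ N, x ^ 2 = 1 → x = 1 := by
      intro x hx
      obtain ⟨g, rfl⟩ := QuotientGroup.mk_surjective x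
      rw [← QuotientGroup.mk_pow, QuotientGroup.eq_one_iff] at hx
      rw [QuotientGroup.eq_one_iff]
      exact sq_mem_quasiTwo hx
    obtain ⟨B', hB'q, hB'X, hB'av⟩ := UF.exists_avoiding q hX (fun x => x ^ 2)
      (by intro x hx h1; exact hx (hsq1 x h1))
      (by
        intro x hx h1
        apply hx
        have h2 : x * x = 1 * x := by
          rw [one_mul, ← pow_two]
          exact h1
        exact mul_right_cancel h2)
      (by
        intro x hx y hy h
        change x ^ 2 = y ^ 2 at h
        have h2 : (x * y⁻¹) ^ 2 = 1 := by
          rw [mul_pow, h, inv_pow, mul_inv_cancel]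
        have := hsq1 _ h2
        rwa [mul_inv_eq_one] at this)
    refine ⟨(QuotientGroup.mk : G → G ⧸ N) ⁻¹' B', Ultrafilter.mem_map.mpr ?_, ?_⟩
    · exact hB'q
    · intro b hb hb2
      simp only [Set.mem_preimage] at hb hb2
      apply hB'av _ hb
      rw [← QuotientGroup.mk_pow]
      exact hb2

/-- The combined "nice" set: square-free, inverse-free, and omitting `1`. -/
lemma exists_nice (p : Ultrafilter G) (h1p : {(1 : G)} ∉ p) :
    ∃ B ∈ p, (1 : G) ∉ B ∧ (∀ b ∈ B, b ^ 2 ∉ B) ∧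
      (∀ b ∈ B, ∀ b' ∈ B, b' = b⁻¹ → b' = b) := by
  classical
  by_cases hT2 : {g : G | g ^ 2 = 1} ∈ p
  · refine ⟨{g : G | g ^ 2 = 1} ∩ {x | x ≠ 1}, Filter.inter_mem hT2 (UF.ne_mem h1p),
      ?_, ?_, ?_⟩
    · rintro ⟨-, h⟩; exact h rfl
    · rintro b ⟨hb, -⟩ ⟨-, hb2⟩; exact hb2 hb
    · rintro b ⟨hb, -⟩ b' - hb'
      have h2 : b * b = 1 := by rw [← pow_two]; exact hb
      have h3 : b = b⁻¹ := eq_inv_of_mul_eq_one_left h2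
      rw [hb', ← h3]
  · have hX : {g : G | g ^ 2 ≠ 1} ∈ p :=
      Ultrafilter.compl_mem_iff_notMem.mpr hT2
    obtain ⟨B₁, hB₁p, hB₁X, hB₁av⟩ := UF.exists_avoiding p hX (fun g => g⁻¹)
      (by intro x hx; simpa using hx)
      (by
        intro x hx h
        change x⁻¹ = x at h
        apply hx
        rw [pow_two]
        nth_rewrite 2 [← h]
        exact mul_inv_cancel x)
      (by intro x _ y _ h; exact inv_injective h)
    obtain ⟨B₂, hB₂p, hB₂sq⟩ := exists_sqfree p h1p
    refine ⟨B₁ ∩ B₂, Filter.inter_mem hB₁p hB₂p, ?_, ?_, ?_⟩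
    · rintro ⟨h1, -⟩
      exact hB₁X h1 (one_pow 2)
    · rintro b ⟨-, hb⟩ ⟨-, hb2⟩
      exact hB₂sq b hb hb2
    · rintro b ⟨hb, -⟩ b' ⟨hb', -⟩ heq
      exact absurd (heq ▸ hb') (hB₁av b hb)


end NiceSet

open Hindman

section FPLemmas


variable {M : Type*} [CommMonoid M]

lemma FP_exists_finset {x : Stream' M} {g : M} (h : g ∈ FP x) :
    ∃ s : Finset ℕ, s.Nonempty ∧ g = s.prod x.get := by
  induction h with
  | head' a => exact ⟨{0}, ⟨0, Finset.mem_singleton_self 0⟩, by simp [Stream'.head]⟩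
  | tail' a m h ih =>
    obtain ⟨s, hs, rfl⟩ := ih
    refine ⟨s.image (· + 1), hs.image _, ?_⟩
    rw [Finset.prod_image (by intro i _ j _ hij; exact Nat.add_right_cancel hij)]
    rfl
  | cons' a m h ih =>
    obtain ⟨s, hs, rfl⟩ := ih
    have h0 : (0 : ℕ) ∉ s.image (· + 1) := by simp
    refine ⟨insert 0 (s.image (· + 1)), Finset.insert_nonempty _ _, ?_⟩
    rw [Finset.prod_insert h0, Finset.prod_image (by intro i _ j _ hij; exact Nat.add_right_cancel hij)]
    rfl

lemma FP_tail_exists_finset {x : Stream' M} {g : M} (h : g ∈ FP x.tail) :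
    ∃ s : Finset ℕ, s.Nonempty ∧ (0 : ℕ) ∉ s ∧ g = s.prod x.get := by
  obtain ⟨s, hs, rfl⟩ := FP_exists_finset h
  refine ⟨s.image (· + 1), hs.image _, by simp, ?_⟩
  rw [Finset.prod_image (by intro i _ j _ hij; exact Nat.add_right_cancel hij)]
  rfl


end FPLemmas

section KeyContra


variable {G : Type*} [CommGroup G]

/-- The combinatorial core: with a nice base set, the defining relation of a "shifted"
product system is impossible. -/
lemma key_contra {B : Set G} (hB1 : (1 : G) ∉ B)
    (hBsq : ∀ b ∈ B, b ^ 2 ∉ B) (hBinv : ∀ b ∈ B, ∀ b' ∈ B, b' = b⁻¹ → b' = b)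
    {x : Stream' G} (hx : FP x ⊆ B)
    {U U' U'' : Finset ℕ}
    (h0U : (0:ℕ) ∉ U) (h0U' : (0:ℕ) ∉ U') (h0U'' : (0:ℕ) ∉ U'')
    (heq : x.get 0 * U.prod x.get * U'.prod x.get = U''.prod x.get) : False := by
  classical
  set π : Finset ℕ → G := fun s => s.prod x.get with hπ
  have hmem : ∀ s : Finset ℕ, s.Nonempty → π s ∈ B := fun s hs =>
    hx (FP.finset_prod x s hs)
  -- notation
  set I : Finset ℕ := U ∩ U' with hI
  set A : Finset ℕ := insert 0 (U ∪ U') with hA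
  set J : Finset ℕ := A ∩ U'' with hJ
  set A' : Finset ℕ := A \ J with hA'
  set R : Finset ℕ := U'' \ J with hR
  set I₁ : Finset ℕ := I ∩ J with hI₁
  set I₂ : Finset ℕ := I \ J with hI₂
  set L : Finset ℕ := A' \ I₂ with hL
  set K : Finset ℕ := L ∪ I₁ with hK
  have h0UU : (0:ℕ) ∉ U ∪ U' := by simp [h0U, h0U']
  -- the equation in the form π A * π I = π U''
  have e0 : π A * π I = π U'' := by
    rw [hπ]
    simp only
    rw [hA, Finset.prod_insert h0UU, hI, mul_assoc, Finset.prod_union_inter]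
    rw [← mul_assoc]
    exact heq
  -- cancel J
  have eA : π A' * π J = π A := by
    rw [hπ]; exact Finset.prod_sdiff (Finset.inter_subset_left)
  have eU'' : π R * π J = π U'' := by
    rw [hπ]; exact Finset.prod_sdiff (Finset.inter_subset_right)
  have e1 : π A' * π I = π R := by
    have : π A' * π J * π I = π R * π J := by rw [eA, e0, eU'']
    have h2 : π A' * π I * π J = π R * π J := by
      rw [mul_right_comm]; exact this
    exact mul_right_cancel h2
  -- split I
  have eI : π I₂ * π I₁ = π I := by
    rw [hπ]
    have : I \ I₁ = I₂ := by rw [hI₁, hI₂, Finset.sdiff_inter_self_left]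
    rw [← this]
    exact Finset.prod_sdiff (Finset.inter_subset_left)
  have hI₂A' : I₂ ⊆ A' := by
    intro i hi
    rw [hI₂, Finset.mem_sdiff] at hi
    rw [hA', Finset.mem_sdiff]
    refine ⟨?_, hi.2⟩
    rw [hA, Finset.mem_insert]
    right
    have := hi.1
    rw [hI, Finset.mem_inter] at this
    exact Finset.mem_union_left _ this.1
  have eA' : π L * π I₂ = π A' := by
    rw [hπ]; exact Finset.prod_sdiff hI₂A'
  have hLI₁ : Disjoint L I₁ := by
    rw [Finset.disjoint_left]
    intro i hiL hiI₁
    rw [hL, Finset.mem_sdiff, hA', Finset.mem_sdiff] at hiL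
    exact hiL.1.2 (Finset.mem_of_mem_inter_right hiI₁)
  have eK : π K = π L * π I₁ := by
    rw [hπ]; exact Finset.prod_union hLI₁
  -- main equation : π K * (π I₂)^2 = π R
  have main : π K * (π I₂) ^ 2 = π R := by
    rw [eK, ← e1, ← eA', ← eI, pow_two]
    ac_rfl
  -- membership and disjointness facts
  have h0A' : (0:ℕ) ∈ A' := by
    rw [hA', Finset.mem_sdiff, hA]
    refine ⟨Finset.mem_insert_self 0 _, ?_⟩
    rw [hJ]
    intro h0
    exact h0U'' (Finset.mem_of_mem_inter_right h0)
  have h0L : (0:ℕ) ∈ L := by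
    rw [hL, Finset.mem_sdiff]
    refine ⟨h0A', ?_⟩
    rw [hI₂]
    intro h0
    have := Finset.mem_sdiff.mp h0
    exact h0U (Finset.mem_of_mem_inter_left (by rw [hI] at this; exact this.1))
  have hKne : K.Nonempty := ⟨0, Finset.mem_union_left _ h0L⟩
  have hKI₂ : Disjoint K I₂ := by
    rw [Finset.disjoint_left]
    intro i hiK hiI₂
    rcases Finset.mem_union.mp hiK with hiL | hiI₁
    · exact (Finset.mem_sdiff.mp hiL).2 hiI₂
    · exact (Finset.mem_sdiff.mp hiI₂).2 (Finset.mem_of_mem_inter_right hiI₁)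
  have hKR : Disjoint K R := by
    rw [Finset.disjoint_left]
    intro i hiK hiR
    have hiR' := Finset.mem_sdiff.mp hiR
    rcases Finset.mem_union.mp hiK with hiL | hiI₁
    · have hiA' := Finset.mem_sdiff.mp ((Finset.mem_sdiff.mp hiL).1)
      exact hiA'.2 (by rw [hJ]; exact Finset.mem_inter.mpr ⟨hiA'.1, hiR'.1⟩)
    · exact hiR'.2 (Finset.mem_of_mem_inter_right hiI₁)
  have ha : π K ∈ B := hmem K hKne
  by_cases hRne : R.Nonempty
  · -- square contradiction
    have hu : π (K ∪ I₂) ∈ B := hmem _ (Finset.Nonempty.inl hKne)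
    have hu2 : π (K ∪ I₂) ^ 2 = π (K ∪ R) := by
      rw [hπ]
      simp only
      rw [Finset.prod_union hKI₂, Finset.prod_union hKR]
      have : (K.prod x.get * I₂.prod x.get) ^ 2
          = K.prod x.get * (K.prod x.get * I₂.prod x.get ^ 2) := by
        rw [pow_two, pow_two]; ac_rfl
      rw [this]
      rw [hπ] at main
      simp only at main
      rw [main]
    have hmem2 : π (K ∪ R) ∈ B := hmem _ (Finset.Nonempty.inl hKne)
    rw [← hu2] at hmem2
    exact hBsq _ hu hmem2
  · -- R empty
    rw [Finset.not_nonempty_iff_eq_empty] at hRne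
    have hπR : π R = 1 := by rw [hπ, hRne]; exact Finset.prod_empty
    by_cases hI₂ne : I₂.Nonempty
    · have hs : π I₂ ∈ B := hmem _ hI₂ne
      have hu : π (K ∪ I₂) ∈ B := hmem _ (Finset.Nonempty.inl hKne)
      have huEq : π (K ∪ I₂) = π K * π I₂ := by
        rw [hπ]; exact Finset.prod_union hKI₂
      have hinv : π (K ∪ I₂) = (π I₂)⁻¹ := by
        rw [huEq]
        have : π K * π I₂ * π I₂ = 1 := by
          rw [← hπR, ← main, pow_two]; ac_rfl
        rw [eq_inv_iff_mul_eq_one]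
        exact this
      have := hBinv _ hs _ hu hinv
      -- π (K ∪ I₂) = π I₂, so π K = 1
      rw [huEq] at this
      have hK1 : π K = 1 := by
        have h2 : π K * π I₂ = 1 * π I₂ := by rw [this, one_mul]
        exact mul_right_cancel h2
      rw [hK1] at ha
      exact hB1 ha
    · rw [Finset.not_nonempty_iff_eq_empty] at hI₂ne
      have hπI₂ : π I₂ = 1 := by rw [hπ, hI₂ne]; exact Finset.prod_empty
      have hK1 : π K = 1 := by
        have h5 := main
        rw [hπI₂, hπR] at h5
        simpa using h5
      rw [hK1] at ha
      exact hB1 ha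


end KeyContra


theorem comm_regular {G : Type*} [CommGroup G] (p : Ultrafilter G)
    (hsp : StronglyProductive p) (hnp : ∀ a : G, p ≠ pure a) : RegularSP p := by
  have h1p : {(1 : G)} ∉ p := fun h => hnp 1 (UF.pure_of_singleton h)
  obtain ⟨B, hBp, hB1, hBsq, hBinv⟩ := exists_nice p h1p
  refine ⟨B, hBp, ?_⟩
  intro x hx hD
  obtain ⟨z, hzD, -⟩ := hsp _ hD
  obtain ⟨c₀, hc₀, e₀⟩ := hzD (FP.head z)
  obtain ⟨c₁, hc₁, e₁⟩ := hzD (FP.tail z _ (FP.head z.tail))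
  obtain ⟨c₂, hc₂, e₂⟩ := hzD (FP.cons z _ (FP.head z.tail))
  change x.head * c₀ = z.head at e₀
  change x.head * c₁ = z.tail.head at e₁
  change x.head * c₂ = z.head * z.tail.head at e₂
  have heq : x.head * c₀ * (x.head * c₁) = x.head * c₂ := by
    rw [e₀, e₁, e₂]
  have heq2 : x.head * c₀ * c₁ = c₂ := by
    have h2 : x.head * (x.head * c₀ * c₁) = x.head * c₂ := by
      rw [← heq]; ac_rfl
    exact mul_left_cancel h2
  obtain ⟨U, hUne, h0U, rfl⟩ := FP_tail_exists_finset hc₀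
  obtain ⟨U', hU'ne, h0U', rfl⟩ := FP_tail_exists_finset hc₁
  obtain ⟨U'', hU''ne, h0U'', rfl⟩ := FP_tail_exists_finset hc₂
  exact key_contra hB1 hBsq hBinv hx h0U h0U' h0U'' heq2

section MapLemmas

variable {M N : Type*} [Semigroup M] [Semigroup N]

lemma FP_map (f : M →ₙ* N) {x : Stream' M} {g : M} (h : g ∈ FP x) :
    f g ∈ FP (fun n => f (x n)) := by
  induction h with
  | head' a => exact FP.head _
  | tail' a m h ih => exact FP.tail _ _ ih
  | cons' a m h ih =>
    rw [map_mul]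
    exact FP.cons _ _ ih

lemma FP_map_exists (f : M →ₙ* N) {y : Stream' N} {g : N} (h : g ∈ FP y) :
    ∀ x : Stream' M, (∀ n, y n = f (x n)) → ∃ m ∈ FP x, f m = g := by
  induction h with
  | head' a =>
    intro x hxy
    exact ⟨x.head, FP.head x, (hxy 0).symm⟩
  | tail' a m h ih =>
    intro x hxy
    obtain ⟨m₀, hm₀, rfl⟩ := ih x.tail (fun n => hxy (n + 1))
    exact ⟨m₀, FP.tail _ _ hm₀, rfl⟩
  | cons' a m h ih =>
    intro x hxy
    obtain ⟨m₀, hm₀, rfl⟩ := ih x.tail (fun n => hxy (n + 1))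
    refine ⟨x.head * m₀, FP.cons _ _ hm₀, ?_⟩
    rw [map_mul]
    congr 1
    exact (hxy 0).symm

lemma sp_map (φ : M →ₙ* N) (p : Ultrafilter M) (hsp : StronglyProductive p) :
    StronglyProductive (p.map φ) := by
  intro A hA
  obtain ⟨x, hx1, hx2⟩ := hsp (φ ⁻¹' A) (Ultrafilter.mem_map.mp hA)
  refine ⟨fun n => φ (x n), ?_, ?_⟩
  · intro g hg
    obtain ⟨m, hm, rfl⟩ := FP_map_exists φ hg x (fun n => rfl)
    exact hx1 hm
  · rw [Ultrafilter.mem_map]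
    exact Filter.mem_of_superset hx2 (fun m hm => FP_map φ hm)

lemma FP_cases {y : Stream' M} {g : M} (h : g ∈ FP y) :
    g = y.head ∨ g ∈ FP y.tail ∨ ∃ m ∈ FP y.tail, g = y.head * m := by
  cases h with
  | head' a => exact Or.inl rfl
  | tail' a m h => exact Or.inr (Or.inl h)
  | cons' a m h => exact Or.inr (Or.inr ⟨m, h, rfl⟩)

end MapLemmas

lemma sp_pure {G : Type*} [Group G] {p : Ultrafilter G} (hsp : StronglyProductive p)
    {a : G} (hpa : p = pure a) : a = 1 := by
  have ha : {a} ∈ p := by rw [hpa]; exact (Ultrafilter.mem_pure).mpr rfl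
  obtain ⟨x, hx, -⟩ := hsp _ ha
  have h1 : x.head = a := hx (FP.head x)
  have h2 : x.tail.head = a := hx (FP.tail x _ (FP.head x.tail))
  have h3 : x.head * x.tail.head = a := hx (FP.cons x _ (FP.head x.tail))
  rw [h1, h2] at h3
  exact mul_eq_right.mp h3

lemma derivedSeries_map_subtype (G : Type*) [Group G] (k : ℕ) :
    Subgroup.map (derivedSeries G 1).subtype (derivedSeries ↥(derivedSeries G 1) k)
      = derivedSeries G (k + 1) := by
  induction k with
  | zero =>
    rw [derivedSeries_zero, ← MonoidHom.range_eq_map, Subgroup.range_subtype]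
  | succ k ih =>
    rw [show derivedSeries (↥(derivedSeries G 1)) (k + 1)
          = ⁅derivedSeries (↥(derivedSeries G 1)) k,
              derivedSeries (↥(derivedSeries G 1)) k⁆ from derivedSeries_succ _ _,
        Subgroup.map_commutator, ih]
    exact (derivedSeries_succ _ _).symm

universe u

theorem regular_aux : ∀ (n : ℕ) (G : Type u) [Group G], derivedSeries G n = ⊥ →
    ∀ p : Ultrafilter G, StronglyProductive p → (∀ a : G, p ≠ pure a) → RegularSP p := by
  intro n
  induction n with
  | zero =>
    intro G _ hder p hsp hnp
    exfalso
    apply hnp 1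
    apply UF.pure_of_singleton
    have : (Set.univ : Set G) ⊆ {1} := by
      intro g _
      have : g ∈ derivedSeries G 0 := by rw [derivedSeries_zero]; exact Subgroup.mem_top g
      rw [hder, Subgroup.mem_bot] at this
      simpa using this
    exact Filter.mem_of_superset Filter.univ_mem this
  | succ n ih =>
    intro G _ hder p hsp hnp
    set φ : G →* Abelianization G := Abelianization.of with hφ
    set q : Ultrafilter (Abelianization G) := p.map φ with hq
    have hq_sp : StronglyProductive q := sp_map φ.toMulHom p hsp
    by_cases hqpr : ∀ abar : Abelianization G, q ≠ pure abar
    · -- abelian case applies to q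
      obtain ⟨B', hB'q, hreg'⟩ := comm_regular q hq_sp hqpr
      refine ⟨φ ⁻¹' B', Ultrafilter.mem_map.mp hB'q, ?_⟩
      intro x hx hS
      set y : Stream' (Abelianization G) := fun n => φ (x n) with hy
      have hyB : FP y ⊆ B' := by
        intro g hg
        obtain ⟨m, hm, rfl⟩ := FP_map_exists φ.toMulHom hg x (fun n => rfl)
        exact hx hm
      apply hreg' y hyB
      have himg : φ ⁻¹' ((y.head * ·) '' FP y.tail) ∈ p := by
        refine Filter.mem_of_superset hS ?_
        rintro g ⟨c, hc, rfl⟩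
        refine ⟨φ c, FP_map φ.toMulHom hc, ?_⟩
        show y.head * φ c = φ (x.head * c)
        rw [map_mul]
        rfl
      exact Ultrafilter.mem_map.mpr himg
    · -- quotient is principal: p concentrates on the commutator subgroup
      push_neg at hqpr
      obtain ⟨abar, habar⟩ := hqpr
      have habar1 : abar = 1 := sp_pure hq_sp habar
      subst habar1
      have hker : φ ⁻¹' {(1 : Abelianization G)} ⊆ (derivedSeries G 1 : Set G) := by
        intro g hg
        simp only [Set.mem_preimage, Set.mem_singleton_iff] at hg
        rw [SetLike.mem_coe, derivedSeries_one]
        exact (QuotientGroup.eq_one_iff g).mp hg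
      have hHp : (derivedSeries G 1 : Set G) ∈ p := by
        have h1 : {(1 : Abelianization G)} ∈ q := by
          rw [habar]; exact (Ultrafilter.mem_pure).mpr rfl
        exact Filter.mem_of_superset (Ultrafilter.mem_map.mp h1) hker
      set H := derivedSeries G 1 with hH
      have hrange : Set.range (Subtype.val : ↥H → G) ∈ p := by
        rw [Subtype.range_coe_subtype]
        exact hHp
      set p' : Ultrafilter ↥H := p.comap Subtype.val_injective hrange with hp'
      have hmem' : ∀ s : Set ↥H, s ∈ p' ↔ Subtype.val '' s ∈ p := by
        intro s
        exact Ultrafilter.mem_comap _ _ _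
      -- strongly productive
      have hsp' : StronglyProductive p' := by
        intro Abar hAbar
        have hval : Subtype.val '' Abar ∈ p := (hmem' Abar).mp hAbar
        obtain ⟨x, hx1, hx2⟩ := hsp _ hval
        have hxH : ∀ n, x n ∈ H := by
          intro n
          obtain ⟨m, -, hm2⟩ := hx1 (FP.singleton x n)
          exact (show (m : G) = x n from hm2) ▸ m.2
        set x' : Stream' ↥H := fun n => ⟨x n, hxH n⟩ with hx'
        refine ⟨x', ?_, ?_⟩
        · intro g' hg'
          have hvg : (g' : G) ∈ FP x := FP_map H.subtype.toMulHom hg'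
          obtain ⟨abar, habar, hval2⟩ := hx1 hvg
          have : abar = g' := Subtype.val_injective hval2
          exact this ▸ habar
        · rw [hmem']
          refine Filter.mem_of_superset hx2 ?_
          intro g hg
          obtain ⟨m, hm, hfm⟩ := FP_map_exists H.subtype.toMulHom hg x' (fun n => rfl)
          exact ⟨m, hm, hfm⟩
      -- nonprincipal
      have hnp' : ∀ a' : ↥H, p' ≠ pure a' := by
        intro a' ha'
        apply hnp (a' : G)
        apply UF.pure_of_singleton
        have : ({a'} : Set ↥H) ∈ p' := by rw [ha']; exact (Ultrafilter.mem_pure).mpr rfl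
        have himg := (hmem' _).mp this
        simpa using himg
      -- derived series
      have hderH : derivedSeries ↥H n = ⊥ := by
        have hmap : Subgroup.map H.subtype (derivedSeries ↥H n) = ⊥ := by
          rw [derivedSeries_map_subtype, hder]
        rw [Subgroup.map_eq_bot_iff] at hmap
        have : H.subtype.ker = ⊥ := Subgroup.ker_subtype H
        rw [this, le_bot_iff] at hmap
        exact hmap
      obtain ⟨B', hB'p', hreg'⟩ := ih ↥H hderH p' hsp' hnp'
      refine ⟨Subtype.val '' B', (hmem' B').mp hB'p', ?_⟩
      intro x hx hS
      have hxH : ∀ n, x n ∈ H := by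
        intro n
        obtain ⟨m, -, hm2⟩ := hx (FP.singleton x n)
        exact (show (m : G) = x n from hm2) ▸ m.2
      set x' : Stream' ↥H := fun n => ⟨x n, hxH n⟩ with hx'
      have hx'B : FP x' ⊆ B' := by
        intro g' hg'
        have hvg : (g' : G) ∈ FP x := FP_map H.subtype.toMulHom hg'
        obtain ⟨abar, habar, hval2⟩ := hx hvg
        exact (Subtype.val_injective hval2) ▸ habar
      apply hreg' x' hx'B
      rw [hmem']
      refine Filter.mem_of_superset hS ?_
      rintro g ⟨c, hc, rfl⟩
      obtain ⟨c', hc', hvc⟩ := FP_map_exists H.subtype.toMulHom hc x'.tail (fun n => rfl)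
      refine ⟨x'.head * c', ⟨c', hc', rfl⟩, ?_⟩
      have hvc' : (c' : G) = c := hvc
      show ((x'.head * c' : ↥H) : G) = x.head * c
      push_cast
      rw [hvc']
      rfl

lemma pure_mul_pure {G : Type*} [Semigroup G] (a b : G) :
    (pure a : Ultrafilter G) * pure b = pure (a * b) := by
  apply Ultrafilter.coe_injective
  apply Filter.ext
  intro s
  have h1 : s ∈ (↑((pure a : Ultrafilter G) * pure b) : Filter G)
      ↔ (∀ᶠ m in ↑((pure a : Ultrafilter G) * pure b), m ∈ s) := by
    rw [Filter.eventually_iff, Set.setOf_mem_eq]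
  rw [h1, Ultrafilter.eventually_mul]
  simp



/-- Every nonprincipal strongly productive ultrafilter on a solvable group is regular, and
consequently every strongly productive ultrafilter on a solvable group is idempotent. -/
theorem solvable_stronglyProductive_regular_and_idempotent
    {G : Type*} [Group G] (hG : IsSolvable G) :
    (∀ p : Ultrafilter G, StronglyProductive p → (∀ a : G, p ≠ pure a) → RegularSP p) ∧
    (∀ p : Ultrafilter G, StronglyProductive p → p * p = p) := by
  obtain ⟨n, hn⟩ := hG.solvable
  have part1 : ∀ p : Ultrafilter G, StronglyProductive p → (∀ a : G, p ≠ pure a) →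
      RegularSP p := fun p hsp hnp => regular_aux n G hn p hsp hnp
  refine ⟨part1, ?_⟩
  intro p hsp
  by_cases hpr : ∃ a : G, p = pure a
  · obtain ⟨a, hpa⟩ := hpr
    have ha1 : a = 1 := sp_pure hsp hpa
    rw [hpa, ha1, pure_mul_pure, mul_one]
  · push_neg at hpr
    obtain ⟨B, hBp, hregB⟩ := part1 p hsp hpr
    refine Ultrafilter.coe_le_coe.mp ?_
    intro A hA
    rw [Ultrafilter.mem_coe] at hA
    have hAB : A ∩ B ∈ p := Filter.inter_mem hA hBp
    obtain ⟨x, hx1, hx2⟩ := hsp _ hAB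
    have hdrop : ∀ k, FP (x.drop k) ∈ p := by
      intro k
      induction k with
      | zero => simpa using hx2
      | succ k ih =>
        set y := x.drop k with hy
        have hsub : FP y ⊆ {y.head} ∪ ((y.head * ·) '' FP y.tail ∪ FP y.tail) := by
          intro g hg
          rcases FP_cases hg with h | h | ⟨m, hm, rfl⟩
          · exact Or.inl (h ▸ rfl)
          · exact Or.inr (Or.inr h)
          · exact Or.inr (Or.inl ⟨m, hm, rfl⟩)
        have hun := Filter.mem_of_superset ih hsub
        rcases Ultrafilter.union_mem_iff.mp hun with h1 | h2
        · exact absurd (UF.pure_of_singleton h1) (hpr _)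
        rcases Ultrafilter.union_mem_iff.mp h2 with h3 | h4
        · exact absurd h3 (hregB y (fun g hg => (hx1 (FP_drop_subset_FP x k hg)).2))
        · rw [Stream'.tail_drop'] at h4
          exact h4
    have hout : {g : G | {y : G | g * y ∈ A} ∈ p} ∈ p := by
      refine Filter.mem_of_superset hx2 ?_
      intro g hg
      obtain ⟨m, hm⟩ := Hindman.FP.mul hg
      refine Filter.mem_of_superset (hdrop m) ?_
      intro y hy
      exact (hx1 (hm y hy)).1
    show A ∈ (↑(p * p) : Filter G)
    have := (Ultrafilter.eventually_mul p p (· ∈ A)).mpr ?_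
    · simpa using this
    · -- ∀ᶠ g in ↑p, ∀ᶠ y in ↑p, g * y ∈ A
      exact hout
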